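/- Let μ1, μ2 be probability measures on (Θ, Σ) and let Φ : Θ → [0, ∞) be measurable with 0 < Z_{Φ,μ_i} < ∞ for i = 1, 2, and suppose ess inf_{μ_i} Φ = 0 for some i ∈ {1, 2}. Then d_TV((μ1)_Φ, (μ2)_Φ) ≤ (max(Z_{Φ,μ1}, Z_{Φ,μ2}))⁻¹ · ( d_TV(μ1, μ2) + |Z_{Φ,μ2} − Z_{Φ,μ1}|/2 ), and |Z_{Φ,μ2} − Z_{Φ,μ1}| ≤ 2 d_TV(μ1, μ2). -/

import Mathlib

open MeasureTheory Real

namespace PaperStmt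

variable {Θ : Type*}

/-- The evidence `Z_{Φ,μ} = ∫ exp (-Φ) dμ`. -/
noncomputable def evid [MeasurableSpace Θ] (μ : Measure Θ) (Φ : Θ → ℝ) : ℝ :=
  ∫ θ, Real.exp (-(Φ θ)) ∂μ

/-- The posterior `μ_Φ`, with density `exp (-Φ) / Z_{Φ,μ}` with respect to `μ`. -/
noncomputable def post [MeasurableSpace Θ] (μ : Measure Θ) (Φ : Θ → ℝ) : Measure Θ :=
  μ.withDensity fun θ => ENNReal.ofReal (Real.exp (-(Φ θ)) / evid μ Φ)

/-- Total variation distance, computed with densities with respect to `ρ1 + ρ2`. -/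
noncomputable def tvDist [MeasurableSpace Θ] (ρ1 ρ2 : Measure Θ) : ℝ :=
  (1 / 2) * ∫ θ, |(ρ1.rnDeriv (ρ1 + ρ2) θ).toReal
    - (ρ2.rnDeriv (ρ1 + ρ2) θ).toReal| ∂(ρ1 + ρ2)

lemma tvDist_comm [MeasurableSpace Θ] (ρ1 ρ2 : Measure Θ) : tvDist ρ1 ρ2 = tvDist ρ2 ρ1 := by
  unfold tvDist
  rw [add_comm ρ2 ρ1]
  congr 1
  exact integral_congr_ae (Filter.Eventually.of_forall fun θ => abs_sub_comm _ _)

lemma post_isFiniteMeasure [MeasurableSpace Θ] (μ : Measure Θ) [IsProbabilityMeasure μ]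
    (Φ : Θ → ℝ) (hnn : ∀ θ, 0 ≤ Φ θ) (hZ : 0 < evid μ Φ) :
    IsFiniteMeasure (post μ Φ) := by
  constructor
  rw [post, withDensity_apply _ MeasurableSet.univ, setLIntegral_univ]
  calc ∫⁻ θ, ENNReal.ofReal (Real.exp (-(Φ θ)) / evid μ Φ) ∂μ
      ≤ ∫⁻ _, ENNReal.ofReal (1 / evid μ Φ) ∂μ := by
        refine lintegral_mono fun θ => ENNReal.ofReal_le_ofReal ?_
        gcongr
        exact Real.exp_le_one_iff.2 (neg_nonpos.2 (hnn θ))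
    _ < ⊤ := by
        rw [lintegral_const]
        exact ENNReal.mul_lt_top ENNReal.ofReal_lt_top (measure_lt_top _ _)

/-- Change of base measure for the total variation distance. -/
lemma tvDist_eq [MeasurableSpace Θ] (ρ1 ρ2 ν : Measure Θ)
    [IsFiniteMeasure ρ1] [IsFiniteMeasure ρ2] [SigmaFinite ν]
    (h1 : ρ1 ≪ ν) (h2 : ρ2 ≪ ν) :
    tvDist ρ1 ρ2 = (1 / 2) * ∫ θ, |(ρ1.rnDeriv ν θ).toReal
      - (ρ2.rnDeriv ν θ).toReal| ∂ν := by
  set ν' := ρ1 + ρ2 with hν'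
  have hν'ν : ν' ≪ ν := by
    intro s hs
    simp [hν', Measure.add_apply, h1 hs, h2 hs]
  have hρ1 : ρ1 ≪ ν' := (Measure.le_add_right le_rfl).absolutelyContinuous
  have hρ2 : ρ2 ≪ ν' := (Measure.le_add_left le_rfl).absolutelyContinuous
  unfold tvDist
  rw [← hν', ← integral_rnDeriv_smul hν'ν]
  congr 1
  refine integral_congr_ae ?_
  filter_upwards [Measure.rnDeriv_mul_rnDeriv (κ := ν) hρ1,
    Measure.rnDeriv_mul_rnDeriv (κ := ν) hρ2] with θ hθ1 hθ2
  have hw : 0 ≤ (ν'.rnDeriv ν θ).toReal := ENNReal.toReal_nonneg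
  rw [smul_eq_mul, ← abs_of_nonneg hw, ← abs_mul, mul_sub]
  have e1 : (ν'.rnDeriv ν θ).toReal * (ρ1.rnDeriv ν' θ).toReal = (ρ1.rnDeriv ν θ).toReal := by
    rw [mul_comm, ← ENNReal.toReal_mul]; exact congrArg ENNReal.toReal hθ1
  have e2 : (ν'.rnDeriv ν θ).toReal * (ρ2.rnDeriv ν' θ).toReal = (ρ2.rnDeriv ν θ).toReal := by
    rw [mul_comm, ← ENNReal.toReal_mul]; exact congrArg ENNReal.toReal hθ2
  rw [e1, e2]

/-- Key inequality, assuming `Z1 ≤ Z2`. -/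
lemma key [MeasurableSpace Θ] (μ1 μ2 : Measure Θ)
    [IsProbabilityMeasure μ1] [IsProbabilityMeasure μ2]
    (Φ : Θ → ℝ) (hΦ : Measurable Φ) (hnn : ∀ θ, 0 ≤ Φ θ)
    (hZ1 : 0 < evid μ1 Φ) (hZ2 : 0 < evid μ2 Φ) (hle : evid μ1 Φ ≤ evid μ2 Φ) :
    tvDist (post μ1 Φ) (post μ2 Φ)
      ≤ (evid μ2 Φ)⁻¹ * (tvDist μ1 μ2 + (evid μ2 Φ - evid μ1 Φ) / 2) := by
  set Z1 := evid μ1 Φ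
  set Z2 := evid μ2 Φ
  set ν := μ1 + μ2 with hν
  set a : Θ → ℝ := fun θ => Real.exp (-(Φ θ)) with ha
  have ha_meas : Measurable a := (Real.measurable_exp.comp hΦ.neg)
  have ha_pos : ∀ θ, 0 < a θ := fun θ => Real.exp_pos _
  have ha_le : ∀ θ, a θ ≤ 1 := fun θ => Real.exp_le_one_iff.2 (neg_nonpos.2 (hnn θ))
  have h1 : μ1 ≪ ν := (Measure.le_add_right le_rfl).absolutelyContinuous
  have h2 : μ2 ≪ ν := (Measure.le_add_left le_rfl).absolutelyContinuous
  set f1 : Θ → ℝ := fun θ => (μ1.rnDeriv ν θ).toReal with hf1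
  set f2 : Θ → ℝ := fun θ => (μ2.rnDeriv ν θ).toReal with hf2
  have hf1_int : Integrable f1 ν := Measure.integrable_toReal_rnDeriv
  have hf2_int : Integrable f2 ν := Measure.integrable_toReal_rnDeriv
  have hf1_nn : ∀ θ, 0 ≤ f1 θ := fun θ => ENNReal.toReal_nonneg
  have hf1_meas : Measurable f1 := (Measure.measurable_rnDeriv _ _).ennreal_toReal
  -- evid as integrals over ν
  have hZ1eq : ∫ θ, f1 θ * a θ ∂ν = Z1 := by
    exact integral_rnDeriv_smul (f := a) h1
  -- finiteness of posteriors
  have hfin1 : IsFiniteMeasure (post μ1 Φ) := post_isFiniteMeasure μ1 Φ hnn hZ1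
  have hfin2 : IsFiniteMeasure (post μ2 Φ) := post_isFiniteMeasure μ2 Φ hnn hZ2
  have hp1 : post μ1 Φ ≪ ν := (withDensity_absolutelyContinuous μ1 _).trans h1
  have hp2 : post μ2 Φ ≪ ν := (withDensity_absolutelyContinuous μ2 _).trans h2
  rw [tvDist_eq (post μ1 Φ) (post μ2 Φ) ν hp1 hp2]
  -- densities of posteriors with respect to ν
  have hd1 : (fun θ => ((post μ1 Φ).rnDeriv ν θ).toReal)
      =ᵐ[ν] fun θ => a θ / Z1 * f1 θ := by
    have := Measure.rnDeriv_withDensity_left (μ := μ1) (ν := ν)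
      (f := fun θ => ENNReal.ofReal (a θ / Z1))
      (ha_meas.div_const _).ennreal_ofReal.aemeasurable
      (Filter.Eventually.of_forall fun θ => ENNReal.ofReal_ne_top)
    filter_upwards [this] with θ hθ
    rw [post] at *
    rw [hθ, ENNReal.toReal_mul, ENNReal.toReal_ofReal (by positivity)]
  have hd2 : (fun θ => ((post μ2 Φ).rnDeriv ν θ).toReal)
      =ᵐ[ν] fun θ => a θ / Z2 * f2 θ := by
    have := Measure.rnDeriv_withDensity_left (μ := μ2) (ν := ν)
      (f := fun θ => ENNReal.ofReal (a θ / Z2))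
      (ha_meas.div_const _).ennreal_ofReal.aemeasurable
      (Filter.Eventually.of_forall fun θ => ENNReal.ofReal_ne_top)
    filter_upwards [this] with θ hθ
    rw [post] at *
    rw [hθ, ENNReal.toReal_mul, ENNReal.toReal_ofReal (by positivity)]
  -- integrability facts
  have haf1_int : Integrable (fun θ => f1 θ * a θ) ν := by
    refine hf1_int.mono (hf1_meas.mul ha_meas).aestronglyMeasurable
      (Filter.Eventually.of_forall fun θ => ?_)
    rw [norm_mul, Real.norm_eq_abs, Real.norm_eq_abs, abs_of_nonneg (hf1_nn θ),
      abs_of_pos (ha_pos θ)]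
    calc f1 θ * a θ ≤ f1 θ * 1 := mul_le_mul_of_nonneg_left (ha_le θ) (hf1_nn θ)
      _ = f1 θ := mul_one _
  have hg_int : Integrable (fun θ => |((post μ1 Φ).rnDeriv ν θ).toReal
      - ((post μ2 Φ).rnDeriv ν θ).toReal|) ν :=
    (Measure.integrable_toReal_rnDeriv.sub Measure.integrable_toReal_rnDeriv).abs
  have hbound_int : Integrable
      (fun θ => |f1 θ - f2 θ| / Z2 + f1 θ * a θ * ((Z2 - Z1) / (Z1 * Z2))) ν :=
    ((hf1_int.sub hf2_int).abs.div_const _).add (haf1_int.mul_const _)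
  -- pointwise bound a.e.
  have hpt : ∀ᵐ θ ∂ν, |((post μ1 Φ).rnDeriv ν θ).toReal - ((post μ2 Φ).rnDeriv ν θ).toReal|
      ≤ |f1 θ - f2 θ| / Z2 + f1 θ * a θ * ((Z2 - Z1) / (Z1 * Z2)) := by
    filter_upwards [hd1, hd2] with θ hθ1 hθ2
    rw [hθ1, hθ2]
    have hf2_nn : 0 ≤ f2 θ := ENNReal.toReal_nonneg
    have e : a θ / Z1 * f1 θ - a θ / Z2 * f2 θ
        = a θ * (f1 θ - f2 θ) / Z2 + f1 θ * a θ * ((Z2 - Z1) / (Z1 * Z2)) := by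
      field_simp
      ring
    rw [e]
    refine (abs_add_le _ _).trans (add_le_add ?_ ?_)
    · rw [abs_div, abs_of_pos hZ2, abs_mul, abs_of_pos (ha_pos θ)]
      have h : a θ * |f1 θ - f2 θ| ≤ |f1 θ - f2 θ| := by
        calc a θ * |f1 θ - f2 θ| ≤ 1 * |f1 θ - f2 θ| :=
              mul_le_mul_of_nonneg_right (ha_le θ) (abs_nonneg _)
          _ = |f1 θ - f2 θ| := one_mul _
      exact (div_le_div_iff_of_pos_right hZ2).mpr h
    · exact le_of_eq (abs_of_nonneg (mul_nonneg (mul_nonneg (hf1_nn θ) (ha_pos θ).le)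
        (div_nonneg (sub_nonneg.2 hle) (by positivity))))
  -- integrate the bound
  have hIle : ∫ θ, |((post μ1 Φ).rnDeriv ν θ).toReal - ((post μ2 Φ).rnDeriv ν θ).toReal| ∂ν
      ≤ ∫ θ, (|f1 θ - f2 θ| / Z2 + f1 θ * a θ * ((Z2 - Z1) / (Z1 * Z2))) ∂ν :=
    integral_mono_ae hg_int hbound_int hpt
  have hIeq : ∫ θ, (|f1 θ - f2 θ| / Z2 + f1 θ * a θ * ((Z2 - Z1) / (Z1 * Z2))) ∂ν
      = (∫ θ, |f1 θ - f2 θ| ∂ν) / Z2 + Z1 * ((Z2 - Z1) / (Z1 * Z2)) := by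
    have hA : Integrable (fun θ => |f1 θ - f2 θ| / Z2) ν :=
      (hf1_int.sub hf2_int).abs.div_const _
    have hB : Integrable (fun θ => f1 θ * a θ * ((Z2 - Z1) / (Z1 * Z2))) ν :=
      haf1_int.mul_const _
    rw [integral_add hA hB, integral_div, integral_mul_const, hZ1eq]
  have htv : tvDist μ1 μ2 = (1 / 2) * ∫ θ, |f1 θ - f2 θ| ∂ν := rfl
  calc (1 / 2) * ∫ θ, |((post μ1 Φ).rnDeriv ν θ).toReal
        - ((post μ2 Φ).rnDeriv ν θ).toReal| ∂ν
      ≤ (1 / 2) * ((∫ θ, |f1 θ - f2 θ| ∂ν) / Z2 + Z1 * ((Z2 - Z1) / (Z1 * Z2))) := by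
        rw [← hIeq]; linarith [hIle]
    _ = Z2⁻¹ * ((1 / 2) * ∫ θ, |f1 θ - f2 θ| ∂ν + (Z2 - Z1) / 2) := by
        field_simp
    _ = Z2⁻¹ * (tvDist μ1 μ2 + (Z2 - Z1) / 2) := by rw [htv]

/-- total variation upper bound for prior perturbations, for a nonnegative
misfit `Φ` with `ess inf_{μ_i} Φ = 0` for some `i`, together with
`|Z_{Φ,μ2} - Z_{Φ,μ1}| ≤ 2 d_TV(μ1, μ2)`. -/
theorem stmt6 [MeasurableSpace Θ] (μ1 μ2 : Measure Θ)
    [IsProbabilityMeasure μ1] [IsProbabilityMeasure μ2]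
    (Φ : Θ → ℝ) (hΦ : Measurable Φ) (hnn : ∀ θ, 0 ≤ Φ θ)
    (hint1 : Integrable (fun θ => Real.exp (-(Φ θ))) μ1)
    (hint2 : Integrable (fun θ => Real.exp (-(Φ θ))) μ2)
    (hZ1 : 0 < evid μ1 Φ) (hZ2 : 0 < evid μ2 Φ)
    (hei : essInf Φ μ1 = 0 ∨ essInf Φ μ2 = 0) :
    tvDist (post μ1 Φ) (post μ2 Φ)
        ≤ (max (evid μ1 Φ) (evid μ2 Φ))⁻¹
            * (tvDist μ1 μ2 + |evid μ2 Φ - evid μ1 Φ| / 2)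
    ∧ |evid μ2 Φ - evid μ1 Φ| ≤ 2 * tvDist μ1 μ2 := by
  constructor
  · rcases le_total (evid μ1 Φ) (evid μ2 Φ) with h | h
    · rw [max_eq_right h, abs_of_nonneg (sub_nonneg.2 h)]
      exact key μ1 μ2 Φ hΦ hnn hZ1 hZ2 h
    · rw [max_eq_left h, abs_of_nonpos (sub_nonpos.2 h), tvDist_comm (post μ1 Φ),
        tvDist_comm μ1 μ2]
      simpa [neg_sub] using key μ2 μ1 Φ hΦ hnn hZ2 hZ1 h
  · -- |Z2 - Z1| ≤ 2 * tvDist μ1 μ2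
    set ν := μ1 + μ2 with hν
    set a : Θ → ℝ := fun θ => Real.exp (-(Φ θ)) with ha
    have ha_meas : Measurable a := (Real.measurable_exp.comp hΦ.neg)
    have ha_pos : ∀ θ, 0 < a θ := fun θ => Real.exp_pos _
    have ha_le : ∀ θ, a θ ≤ 1 := fun θ => Real.exp_le_one_iff.2 (neg_nonpos.2 (hnn θ))
    have h1 : μ1 ≪ ν := (Measure.le_add_right le_rfl).absolutelyContinuous
    have h2 : μ2 ≪ ν := (Measure.le_add_left le_rfl).absolutelyContinuous
    set f1 : Θ → ℝ := fun θ => (μ1.rnDeriv ν θ).toReal with hf1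
    set f2 : Θ → ℝ := fun θ => (μ2.rnDeriv ν θ).toReal with hf2
    have hf1_int : Integrable f1 ν := Measure.integrable_toReal_rnDeriv
    have hf2_int : Integrable f2 ν := Measure.integrable_toReal_rnDeriv
    have hZ1eq : ∫ θ, f1 θ * a θ ∂ν = evid μ1 Φ := by
      exact integral_rnDeriv_smul (f := a) h1
    have hZ2eq : ∫ θ, f2 θ * a θ ∂ν = evid μ2 Φ := by
      exact integral_rnDeriv_smul (f := a) h2
    have haux : ∀ (g : Θ → ℝ), Integrable g ν → Measurable g → (∀ θ, 0 ≤ g θ) →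
        Integrable (fun θ => g θ * a θ) ν := by
      intro g hg hgm hgn
      refine hg.mono (hgm.mul ha_meas).aestronglyMeasurable
        (Filter.Eventually.of_forall fun θ => ?_)
      rw [norm_mul, Real.norm_eq_abs, Real.norm_eq_abs, abs_of_nonneg (hgn θ),
        abs_of_pos (ha_pos θ)]
      calc g θ * a θ ≤ g θ * 1 := mul_le_mul_of_nonneg_left (ha_le θ) (hgn θ)
        _ = g θ := mul_one _
    have haf1 : Integrable (fun θ => f1 θ * a θ) ν :=
      haux f1 hf1_int (Measure.measurable_rnDeriv _ _).ennreal_toReal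
        (fun θ => ENNReal.toReal_nonneg)
    have haf2 : Integrable (fun θ => f2 θ * a θ) ν :=
      haux f2 hf2_int (Measure.measurable_rnDeriv _ _).ennreal_toReal
        (fun θ => ENNReal.toReal_nonneg)
    have hdiff : evid μ2 Φ - evid μ1 Φ = ∫ θ, (f2 θ * a θ - f1 θ * a θ) ∂ν := by
      rw [integral_sub haf2 haf1, hZ1eq, hZ2eq]
    rw [hdiff]
    calc |∫ θ, (f2 θ * a θ - f1 θ * a θ) ∂ν|
        ≤ ∫ θ, |f2 θ * a θ - f1 θ * a θ| ∂ν := by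
          simpa [Real.norm_eq_abs] using
            norm_integral_le_integral_norm (fun θ => f2 θ * a θ - f1 θ * a θ) (μ := ν)
      _ ≤ ∫ θ, |f1 θ - f2 θ| ∂ν := by
          refine integral_mono (haf2.sub haf1).abs (hf1_int.sub hf2_int).abs fun θ => ?_
          rw [← sub_mul, abs_mul, abs_of_pos (ha_pos θ), abs_sub_comm (f2 θ)]
          calc |f1 θ - f2 θ| * a θ ≤ |f1 θ - f2 θ| * 1 := by gcongr; exact ha_le θ
            _ = |f1 θ - f2 θ| := mul_one _
      _ = 2 * tvDist μ1 μ2 := by rw [tvDist]; ring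

end PaperStmt
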